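/- If a 3×3 communication matrix D is implementable with a qubit and has all diagonal entries equal to 2/3, then D = D_{3,1/3}, the matrix with 2/3 on the diagonal and 1/6 off the diagonal. -/

import Mathlib

open Matrix BigOperators
open scoped ComplexOrder
set_option maxHeartbeats 1000000

/-- A quantum (dimension-d) implementation of a communication matrix `C`:
states `ρ` are density matrices, `M` is a POVM, and `C a b = tr(ρ_a M(b))`. -/
def QImpl {d n m : ℕ} (C : Matrix (Fin n) (Fin m) ℝ)
    (ρ : Fin n → Matrix (Fin d) (Fin d) ℂ) (M : Fin m → Matrix (Fin d) (Fin d) ℂ) : Prop :=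
  (∀ a, (ρ a).PosSemidef) ∧ (∀ a, (ρ a).trace = 1) ∧
  (∀ b, (M b).PosSemidef) ∧ (∑ b, M b) = 1 ∧
  ∀ a b, (C a b : ℂ) = (ρ a * M b).trace
noncomputable def Dmat (n : ℕ) (ε : ℝ) : Matrix (Fin n) (Fin n) ℝ :=
  Matrix.of fun i j => if i = j then 1 - ε else ε / (n - 1)



lemma pairdot (s0 s1 s2 t0 t1 t2 z0 z1 z2 : ℝ)
    (hS : s0+s1+s2=0) (hT : t0+t1+t2=0) (hZ : z0+z1+z2=0)
    (h0 : s0^2+t0^2+z0^2 = 4/9) (h1 : s1^2+t1^2+z1^2 = 4/9)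
    (h2 : s2^2+t2^2+z2^2 = 4/9) :
    s0*s1+t0*t1+z0*z1 = -2/9 := by
  linear_combination (s0+s1-s2)/2 * hS + (t0+t1-t2)/2 * hT + (z0+z1-z2)/2 * hZ
    + (1/2) * h2 - (1/2) * h0 - (1/2) * h1

lemma key (P X Y Q R S T : Fin 3 → ℝ)
    (hρ : ∀ a, X a^2 + Y a^2 ≤ P a * (1 - P a))
    (hQ0 : ∀ b, 0 ≤ Q b) (hR0 : ∀ b, 0 ≤ R b)
    (hM : ∀ b, S b^2 + T b^2 ≤ Q b * R b)
    (hQ : Q 0 + Q 1 + Q 2 = 1) (hR : R 0 + R 1 + R 2 = 1)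
    (hS : S 0 + S 1 + S 2 = 0) (hT : T 0 + T 1 + T 2 = 0)
    (F : Fin 3 → Fin 3 → ℝ)
    (hF : ∀ a b, F a b = P a * Q b + (1 - P a) * R b + 2*(X a * S b + Y a * T b))
    (hdiag : ∀ a, F a a = 2/3) :
    ∀ a b, a ≠ b → F a b = 1/6 := by
  have hu : ∀ a, (2*X a)^2 + (2*Y a)^2 + (2*P a - 1)^2 ≤ 1 := by
    intro a; nlinarith [hρ a]
  have hw : ∀ b, (2*S b)^2 + (2*T b)^2 + (Q b - R b)^2 ≤ (Q b + R b)^2 := by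
    intro b; nlinarith [hM b]
  have hα : ∀ a, 2/3 ≤ Q a + R a := by
    intro a
    have hd := hdiag a
    rw [hF a a] at hd
    have hcs : (2*(X a)*(2*S a) + 2*(Y a)*(2*T a) + (2*P a - 1)*(Q a - R a))^2
        ≤ ((2*X a)^2 + (2*Y a)^2 + (2*P a - 1)^2) * ((2*S a)^2 + (2*T a)^2 + (Q a - R a)^2) := by
      nlinarith [sq_nonneg (2*X a*(2*T a) - 2*Y a*(2*S a)),
        sq_nonneg (2*X a*(Q a - R a) - (2*P a - 1)*(2*S a)),
        sq_nonneg (2*Y a*(Q a - R a) - (2*P a - 1)*(2*T a))]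
    nlinarith [hu a, hw a, hQ0 a, hR0 a, sq_nonneg (2*S a), sq_nonneg (2*T a),
      sq_nonneg (Q a - R a), hcs]
  have hα13 : ∀ a, Q a + R a = 2/3 := by
    have h0 := hα 0; have h1 := hα 1; have h2 := hα 2
    have e0 : Q 0 + R 0 = 2/3 := by linarith
    have e1 : Q 1 + R 1 = 2/3 := by linarith
    have e2 : Q 2 + R 2 = 2/3 := by linarith
    intro a; fin_cases a <;> assumption
  have heq : ∀ a, (2*X a = 3*S a ∧ 2*Y a = 3*T a ∧ 2*(2*P a - 1) = 3*(Q a - R a))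
      ∧ (2*S a)^2 + (2*T a)^2 + (Q a - R a)^2 = 4/9 := by
    intro a
    have hd := hdiag a; rw [hF a a] at hd
    have hqa := hα13 a
    have hwa : (2*S a)^2 + (2*T a)^2 + (Q a - R a)^2 ≤ 4/9 := by
      have := hw a; nlinarith
    have hdot : 2*(X a)*(2*S a) + 2*(Y a)*(2*T a) + (2*P a - 1)*(Q a - R a) = 2/3 := by
      linear_combination 2*hd - hqa
    have hz : (2*X a - 3*S a)^2 + (2*Y a - 3*T a)^2 + ((2*P a - 1) - (3/2)*(Q a - R a))^2 ≤ 0 := by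
      linarith [hu a, hwa, hdot]
    have q1 : (2*X a - 3*S a)^2 = 0 := by
      have a1 := sq_nonneg (2*Y a - 3*T a)
      have a2 := sq_nonneg ((2*P a - 1) - (3/2)*(Q a - R a))
      have a3 := sq_nonneg (2*X a - 3*S a)
      linarith only [hz, a1, a2, a3]
    have q2 : (2*Y a - 3*T a)^2 = 0 := by
      have a1 := sq_nonneg (2*X a - 3*S a)
      have a2 := sq_nonneg ((2*P a - 1) - (3/2)*(Q a - R a))
      have a3 := sq_nonneg (2*Y a - 3*T a)
      linarith only [hz, a1, a2, a3]
    have q3 : ((2*P a - 1) - (3/2)*(Q a - R a))^2 = 0 := by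
      have a1 := sq_nonneg (2*X a - 3*S a)
      have a2 := sq_nonneg (2*Y a - 3*T a)
      have a3 := sq_nonneg ((2*P a - 1) - (3/2)*(Q a - R a))
      linarith only [hz, a1, a2, a3]
    have e1 : 2*X a = 3*S a := by
      have := pow_eq_zero_iff (n := 2) (two_ne_zero) |>.mp q1; linarith
    have e2 : 2*Y a = 3*T a := by
      have := pow_eq_zero_iff (n := 2) (two_ne_zero) |>.mp q2; linarith
    have e3 : 2*(2*P a - 1) = 3*(Q a - R a) := by
      have := pow_eq_zero_iff (n := 2) (two_ne_zero) |>.mp q3; linarith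
    refine ⟨⟨e1, e2, e3⟩, ?_⟩
    linear_combination (2/3)*hdot - (4/3)*(S a)*e1 - (4/3)*(T a)*e2 - (1/3)*(Q a - R a)*e3
  have hZsum : (Q 0 - R 0) + (Q 1 - R 1) + (Q 2 - R 2) = 0 := by linarith
  have hSsum : 2*S 0 + 2*S 1 + 2*S 2 = 0 := by linarith
  have hTsum : 2*T 0 + 2*T 1 + 2*T 2 = 0 := by linarith
  have n0 := (heq 0).2
  have n1 := (heq 1).2
  have n2 := (heq 2).2
  have p01 : (2*S 0)*(2*S 1) + (2*T 0)*(2*T 1) + (Q 0 - R 0)*(Q 1 - R 1) = -2/9 :=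
    pairdot _ _ _ _ _ _ _ _ _ hSsum hTsum hZsum n0 n1 n2
  have p02 : (2*S 0)*(2*S 2) + (2*T 0)*(2*T 2) + (Q 0 - R 0)*(Q 2 - R 2) = -2/9 :=
    pairdot _ _ _ _ _ _ _ _ _ (by linarith) (by linarith) (by linarith) n0 n2 n1
  have p12 : (2*S 1)*(2*S 2) + (2*T 1)*(2*T 2) + (Q 1 - R 1)*(Q 2 - R 2) = -2/9 :=
    pairdot _ _ _ _ _ _ _ _ _ (by linarith) (by linarith) (by linarith) n1 n2 n0
  have p10 : (2*S 1)*(2*S 0) + (2*T 1)*(2*T 0) + (Q 1 - R 1)*(Q 0 - R 0) = -2/9 := by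
    linear_combination p01
  have p20 : (2*S 2)*(2*S 0) + (2*T 2)*(2*T 0) + (Q 2 - R 2)*(Q 0 - R 0) = -2/9 := by
    linear_combination p02
  have p21 : (2*S 2)*(2*S 1) + (2*T 2)*(2*T 1) + (Q 2 - R 2)*(Q 1 - R 1) = -2/9 := by
    linear_combination p12
  have hpair : ∀ a b : Fin 3, a ≠ b →
      (2*S a)*(2*S b) + (2*T a)*(2*T b) + (Q a - R a)*(Q b - R b) = -2/9 := by
    intro a b hab
    fin_cases a <;> fin_cases b <;>
      first
        | exact absurd rfl hab
        | exact p01 | exact p02 | exact p12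
        | exact p10 | exact p20 | exact p21
  intro a b hab
  obtain ⟨⟨e1, e2, e3⟩, -⟩ := heq a
  have hp := hpair a b hab
  have hqb := hα13 b
  rw [hF a b]
  linear_combination (1/2)*hqb + (3/4)*hp + (S b)*e1 + (T b)*e2 + ((Q b - R b)/4)*e3


lemma psd2 {A : Matrix (Fin 2) (Fin 2) ℂ} (hA : A.PosSemidef) :
    A 1 0 = (starRingEnd ℂ) (A 0 1) ∧ (A 0 0).im = 0 ∧ (A 1 1).im = 0 ∧
    0 ≤ (A 0 0).re ∧ 0 ≤ (A 1 1).re ∧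
    (A 0 1).re^2 + (A 0 1).im^2 ≤ (A 0 0).re * (A 1 1).re := by
  have h10 : A 1 0 = (starRingEnd ℂ) (A 0 1) := (hA.1.apply 1 0).symm
  have him0 : (A 0 0).im = 0 := by
    have := congrArg Complex.im (hA.1.apply 0 0)
    simp at this; linarith
  have him1 : (A 1 1).im = 0 := by
    have := congrArg Complex.im (hA.1.apply 1 1)
    simp at this; linarith
  have h00 : 0 ≤ (A 0 0).re := by
    have := hA.dotProduct_mulVec_nonneg ![1, 0]
    simp [dotProduct, Matrix.mulVec, Fin.sum_univ_two, Complex.le_def] at this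
    exact this.1
  have h11 : 0 ≤ (A 1 1).re := by
    have := hA.dotProduct_mulVec_nonneg ![0, 1]
    simp [dotProduct, Matrix.mulVec, Fin.sum_univ_two, Complex.le_def] at this
    exact this.1
  refine ⟨h10, him0, him1, h00, h11, ?_⟩
  have hA00 : A 0 0 = ((A 0 0).re : ℂ) := by
    rw [Complex.ext_iff]; constructor <;> simp [him0]
  have hA11 : A 1 1 = ((A 1 1).re : ℂ) := by
    rw [Complex.ext_iff]; constructor <;> simp [him1]
  set a := (A 0 0).re with ha
  set d := (A 1 1).re with hd
  set X := (A 0 1).re with hX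
  set Y := (A 0 1).im with hY
  have hK0 : 0 ≤ X^2 + Y^2 := by positivity
  have hform : ∀ w : ℝ, 0 ≤ (X^2+Y^2)*a + 2*(X^2+Y^2)*w + d*w^2 := by
    intro w
    have := hA.dotProduct_mulVec_nonneg ![A 0 1, (w : ℂ)]
    simp only [dotProduct, Matrix.mulVec, Fin.sum_univ_two, Matrix.cons_val_zero,
      Matrix.cons_val_one, Matrix.head_cons, Pi.star_apply, RCLike.star_def] at this
    rw [h10, hA00, hA11, Complex.le_def] at this
    obtain ⟨hre, -⟩ := this
    simp only [Complex.add_re, Complex.mul_re, Complex.conj_re, Complex.conj_im,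
      Complex.ofReal_re, Complex.ofReal_im, Complex.add_im, Complex.mul_im,
      Complex.zero_re, ← hX, ← hY, ← ha, ← hd] at hre
    nlinarith [hre]
  rcases eq_or_lt_of_le hK0 with hKz | hKpos
  · nlinarith
  rcases eq_or_lt_of_le h11 with hdz | hdpos
  · exfalso
    have hf := hform (-((X^2+Y^2)*a+1)/(2*(X^2+Y^2)))
    have h2K : (0:ℝ) < 2*(X^2+Y^2) := by linarith
    rw [← hdz] at hf
    field_simp at hf
    nlinarith
  · have hf := hform (-(X^2+Y^2)/d)
    have hne : d ≠ 0 := ne_of_gt hdpos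
    have hq : (X^2+Y^2)*a + 2*(X^2+Y^2)*(-(X^2+Y^2)/d) + d*(-(X^2+Y^2)/d)^2
        = ((X^2+Y^2)*a*d - (X^2+Y^2)^2)/d := by field_simp; ring
    rw [hq] at hf
    have h2 : 0 ≤ (X^2+Y^2)*a*d - (X^2+Y^2)^2 := by
      have := (div_nonneg_iff.mp hf)
      rcases this with ⟨h,_⟩ | ⟨_,h⟩
      · exact h
      · linarith
    nlinarith [h2, hKpos]

/-- A qubit-implementable 3×3 communication matrix with all diagonal entries 2/3
must equal D_{3,1/3}. -/
theorem qubit_diag_two_thirds_unique (D : Matrix (Fin 3) (Fin 3) ℝ)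
    (ρ : Fin 3 → Matrix (Fin 2) (Fin 2) ℂ) (M : Fin 3 → Matrix (Fin 2) (Fin 2) ℂ)
    (h : QImpl D ρ M) (hdiag : ∀ a, D a a = 2/3) :
    D = Dmat 3 (1/3) := by
  obtain ⟨hρpsd, hρtr, hMpsd, hMsum, hDtr⟩ := h
  set P : Fin 3 → ℝ := fun a => (ρ a 0 0).re with hP
  set X : Fin 3 → ℝ := fun a => (ρ a 0 1).re with hX
  set Y : Fin 3 → ℝ := fun a => (ρ a 0 1).im with hY
  set Q : Fin 3 → ℝ := fun b => (M b 0 0).re with hQ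
  set R : Fin 3 → ℝ := fun b => (M b 1 1).re with hR
  set S : Fin 3 → ℝ := fun b => (M b 0 1).re with hS
  set T : Fin 3 → ℝ := fun b => (M b 0 1).im with hT
  -- facts about ρ
  have hρ11 : ∀ a, ρ a 1 1 = ((1 - P a : ℝ) : ℂ) := by
    intro a
    obtain ⟨-, him0, him1, -, -, -⟩ := psd2 (hρpsd a)
    have htr := hρtr a
    rw [Matrix.trace_fin_two] at htr
    rw [Complex.ext_iff]
    constructor
    · have := congrArg Complex.re htr
      simp only [Complex.add_re, Complex.one_re] at this
      simp [hP]; linarith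
    · simp [him1]
  have hρ00 : ∀ a, ρ a 0 0 = ((P a : ℝ) : ℂ) := by
    intro a
    obtain ⟨-, him0, -, -, -, -⟩ := psd2 (hρpsd a)
    rw [Complex.ext_iff]; exact ⟨rfl, by simp [him0]⟩
  have hρ10 : ∀ a, ρ a 1 0 = (starRingEnd ℂ) (ρ a 0 1) := fun a => (psd2 (hρpsd a)).1
  have hρdet : ∀ a, X a^2 + Y a^2 ≤ P a * (1 - P a) := by
    intro a
    obtain ⟨-, -, -, -, -, hdet⟩ := psd2 (hρpsd a)
    have h11 : (ρ a 1 1).re = 1 - P a := by rw [hρ11 a]; simp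
    rw [h11] at hdet
    exact hdet
  -- facts about M
  have hM00 : ∀ b, M b 0 0 = ((Q b : ℝ) : ℂ) := by
    intro b
    obtain ⟨-, him0, -, -, -, -⟩ := psd2 (hMpsd b)
    rw [Complex.ext_iff]; exact ⟨rfl, by simp [him0]⟩
  have hM11 : ∀ b, M b 1 1 = ((R b : ℝ) : ℂ) := by
    intro b
    obtain ⟨-, -, him1, -, -, -⟩ := psd2 (hMpsd b)
    rw [Complex.ext_iff]; exact ⟨rfl, by simp [him1]⟩
  have hM10 : ∀ b, M b 1 0 = (starRingEnd ℂ) (M b 0 1) := fun b => (psd2 (hMpsd b)).1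
  have hQ0 : ∀ b, 0 ≤ Q b := fun b => (psd2 (hMpsd b)).2.2.2.1
  have hR0 : ∀ b, 0 ≤ R b := fun b => (psd2 (hMpsd b)).2.2.2.2.1
  have hMdet : ∀ b, S b^2 + T b^2 ≤ Q b * R b := fun b => (psd2 (hMpsd b)).2.2.2.2.2
  -- sums from POVM completeness
  have hsum : ∀ i j, M 0 i j + M 1 i j + M 2 i j = (1 : Matrix (Fin 2) (Fin 2) ℂ) i j := by
    intro i j
    have := congrFun (congrFun hMsum i) j
    rw [← this]
    simp [Matrix.sum_apply, Fin.sum_univ_three]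
  have hQsum : Q 0 + Q 1 + Q 2 = 1 := by
    have := congrArg Complex.re (hsum 0 0)
    simpa [Matrix.one_apply] using this
  have hRsum : R 0 + R 1 + R 2 = 1 := by
    have := congrArg Complex.re (hsum 1 1)
    simpa [Matrix.one_apply] using this
  have hSsum : S 0 + S 1 + S 2 = 0 := by
    have := congrArg Complex.re (hsum 0 1)
    simpa [Matrix.one_apply] using this
  have hTsum : T 0 + T 1 + T 2 = 0 := by
    have := congrArg Complex.im (hsum 0 1)
    simpa [Matrix.one_apply] using this
  -- the trace formula
  have hF : ∀ a b, D a b = P a * Q b + (1 - P a) * R b + 2*(X a * S b + Y a * T b) := by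
    intro a b
    have htr2 : (ρ a * M b).trace
        = ρ a 0 0 * M b 0 0 + ρ a 0 1 * M b 1 0 + (ρ a 1 0 * M b 0 1 + ρ a 1 1 * M b 1 1) := by
      simp [Matrix.trace_fin_two, Matrix.mul_apply, Fin.sum_univ_two]
      try ring
    have e : (D a b : ℂ) = ((P a * Q b + (1 - P a) * R b + 2*(X a * S b + Y a * T b) : ℝ) : ℂ) := by
      rw [hDtr a b, htr2, hρ00 a, hρ11 a, hρ10 a, hM00 b, hM11 b, hM10 b]
      rw [Complex.ext_iff]
      constructor <;>
        simp [Complex.add_re, Complex.mul_re, Complex.add_im, Complex.mul_im,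
          Complex.conj_re, Complex.conj_im, hX, hY] <;> try ring
    exact_mod_cast e
  have hoff := key P X Y Q R S T hρdet hQ0 hR0 hMdet hQsum hRsum hSsum hTsum
    (fun a b => D a b) hF hdiag
  ext a b
  by_cases hab : a = b
  · subst hab
    simp only [Dmat, Matrix.of_apply, if_pos rfl, hdiag a]
    norm_num
  · have := hoff a b hab
    simp only [Dmat, Matrix.of_apply, if_neg hab, this]
    norm_num
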